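/- Let p : ℝ → ℝ be twice differentiable and t : ℝ → ℝ be differentiable, and define the curve γ(θ) = (x(θ), y(θ), z(θ)) by x(θ) = p(θ)cos θ − p'(θ)sin θ, y(θ) = p(θ)sin θ + p'(θ)cos θ, z(θ) = t(θ) − p'(θ)p(θ). Then for every θ, z'(θ) − x'(θ)y(θ) + x(θ)y'(θ) = t'(θ) − (p'(θ))² + (p(θ))². -/
import Mathlib


/-- For the candidate envelope curve γ = (p cos θ − p' sin θ, p sin θ + p' cos θ, t − p'p),
one has z' − x'y + xy' = t' − (p')² + p². -/
theorem envelope_horizontality_defect (p t : ℝ → ℝ)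
    (hp : Differentiable ℝ p) (hp' : Differentiable ℝ (deriv p))
    (ht : Differentiable ℝ t)
    (x y z : ℝ → ℝ)
    (hx : x = fun θ => p θ * Real.cos θ - deriv p θ * Real.sin θ)
    (hy : y = fun θ => p θ * Real.sin θ + deriv p θ * Real.cos θ)
    (hz : z = fun θ => t θ - deriv p θ * p θ) :
    ∀ θ : ℝ,
      deriv z θ - deriv x θ * y θ + x θ * deriv y θ
        = deriv t θ - (deriv p θ) ^ 2 + (p θ) ^ 2 := by
  intro θ
  have hpθ := (hp θ).hasDerivAt
  have hp'θ := (hp' θ).hasDerivAt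
  have htθ := (ht θ).hasDerivAt
  have hcos := Real.hasDerivAt_cos θ
  have hsin := Real.hasDerivAt_sin θ
  have hxθ : HasDerivAt x
      (deriv p θ * Real.cos θ + p θ * (-Real.sin θ)
        - (deriv (deriv p) θ * Real.sin θ + deriv p θ * Real.cos θ)) θ := by
    rw [hx]; exact ((hpθ.mul hcos).sub (hp'θ.mul hsin))
  have hyθ : HasDerivAt y
      (deriv p θ * Real.sin θ + p θ * Real.cos θ
        + (deriv (deriv p) θ * Real.cos θ + deriv p θ * (-Real.sin θ))) θ := by
    rw [hy]; exact ((hpθ.mul hsin).add (hp'θ.mul hcos))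
  have hzθ : HasDerivAt z
      (deriv t θ - (deriv (deriv p) θ * p θ + deriv p θ * deriv p θ)) θ := by
    rw [hz]; exact (htθ.sub (hp'θ.mul hpθ))
  rw [hxθ.deriv, hyθ.deriv, hzθ.deriv, hx, hy]
  have hc := Real.sin_sq_add_cos_sq θ
  linear_combination (deriv (deriv p) θ * p θ + p θ ^ 2) * hc
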